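/- arXiv:0805.3787 — 3 statements merged into one kernel-verified Lean document; each statement's English description precedes it below -/
import Mathlib

section
/- Let K be a monotone, subadditive abstract capacity on subsets of ℝᴺ with the scaling bound K(λ·A) ≤ c·K(A) for 1 ≤ λ ≤ 2. Fix α > 0 and define, for a closed set F and x ∈ ℝᴺ, a*_m(x) = K(2^m·(F ∩ closedBall(x, 2^{-m}))) and W*_F(x) = Σ_m 2^{αm} a*_m(x). Suppose y ∈ ∂(Fᶜ) and W*_F(y) = ∞. Then for any x ∉ F with 2^{-λ} ≤ |x−y| ≤ 2^{-λ+1} (λ ∈ ℤ) one has Σ_{m=1}^{λ} 2^{αm} a*_m(y) ≤ c' · W*_F(x) for a constant c' depending only on c and α; consequently W*_F(x) → ∞ as x → y with x ∉ F. -/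
open scoped ENNReal Pointwise
open Filter

/-- The ball piece `F*_m(x) = F ∩ closedBall(x, 2^{-m})`. -/
def ballPiece {N : ℕ} (F : Set (EuclideanSpace ℝ (Fin N)))
    (x : EuclideanSpace ℝ (Fin N)) (m : ℤ) : Set (EuclideanSpace ℝ (Fin N)) :=
  F ∩ Metric.closedBall x ((2 : ℝ) ^ (-m))

/-- `a*_m(x) = K(2^m · F*_m(x))`. -/
noncomputable def aStar {N : ℕ} (K : Set (EuclideanSpace ℝ (Fin N)) → ℝ≥0∞)
    (F : Set (EuclideanSpace ℝ (Fin N))) (x : EuclideanSpace ℝ (Fin N)) (m : ℤ) : ℝ≥0∞ :=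
  K (((2 : ℝ) ^ m) • ballPiece F x m)

/-- `W*_F(x) = Σ_m 2^{αm} a*_m(x)`. -/
noncomputable def WStar {N : ℕ} (K : Set (EuclideanSpace ℝ (Fin N)) → ℝ≥0∞) (α : ℝ)
    (F : Set (EuclideanSpace ℝ (Fin N))) (x : EuclideanSpace ℝ (Fin N)) : ℝ≥0∞ :=
  ∑' m : ℤ, (2 : ℝ≥0∞) ^ (α * (m : ℝ)) * aStar K F x m

lemma sum_shift_le_tsum (t : ℤ → ℝ≥0∞) (s : Finset ℤ) :
    ∑ m ∈ s, t (m - 2) ≤ ∑' m, t m := by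
  calc ∑ m ∈ s, t (m - 2)
      = ∑ m ∈ s.image (fun m => m - 2), t m :=
        (Finset.sum_image (by intro a _ b _ h; simp only at h; omega)).symm
    _ ≤ ∑' m, t m := ENNReal.sum_le_tsum _

theorem blowup_of_WStar_infinite (N : ℕ) (c : ℝ≥0∞) (α : ℝ)
    (hc : 0 < c) (hcfin : c ≠ ∞) (hα : 0 < α)
    (K : Set (EuclideanSpace ℝ (Fin N)) → ℝ≥0∞)
    (hmono : Monotone K)
    (hsub : ∀ A B : Set (EuclideanSpace ℝ (Fin N)), K (A ∪ B) ≤ K A + K B)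
    (hscale : ∀ (A : Set (EuclideanSpace ℝ (Fin N))) (μ : ℝ), 1 ≤ μ → μ ≤ 2 →
      K ((μ • A : Set (EuclideanSpace ℝ (Fin N)))) ≤ c * K A)
    (F : Set (EuclideanSpace ℝ (Fin N))) (hF : IsClosed F)
    (y : EuclideanSpace ℝ (Fin N)) (hy : y ∈ frontier Fᶜ)
    (hWy : WStar K α F y = ∞) :
    ∃ c' : ℝ≥0∞, 0 < c' ∧ c' ≠ ∞ ∧
      (∀ (x : EuclideanSpace ℝ (Fin N)), x ∉ F → ∀ l : ℤ,
        (2 : ℝ) ^ (-l) ≤ dist x y → dist x y ≤ (2 : ℝ) ^ (-l + 1) →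
        ∑ m ∈ Finset.Icc (1 : ℤ) l, (2 : ℝ≥0∞) ^ (α * (m : ℝ)) * aStar K F y m
          ≤ c' * WStar K α F x) ∧
      Tendsto (WStar K α F) (nhdsWithin y Fᶜ) (nhds ∞) := by
  set c' : ℝ≥0∞ := c ^ 2 * (2 : ℝ≥0∞) ^ (2 * α) with hc'
  have h2top : ((2 : ℝ≥0∞)) ^ (2 * α) ≠ ∞ :=
    (ENNReal.rpow_lt_top_of_nonneg (by positivity) (by norm_num)).ne
  have hc'pos : 0 < c' :=
    ENNReal.mul_pos (pow_ne_zero 2 hc.ne') (ENNReal.rpow_pos (by norm_num) (by norm_num)).ne'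
  have hc'top : c' ≠ ∞ := ENNReal.mul_ne_top (by
    exact ENNReal.pow_ne_top hcfin) h2top
  -- key lemma
  have key : ∀ (x : EuclideanSpace ℝ (Fin N)) (m : ℤ), dist x y ≤ (2 : ℝ) ^ (-m + 1) →
      (2 : ℝ≥0∞) ^ (α * (m : ℝ)) * aStar K F y m
        ≤ c' * ((2 : ℝ≥0∞) ^ (α * ((m - 2 : ℤ) : ℝ)) * aStar K F x (m - 2)) := by
    intro x m hd
    have hzpos : (0 : ℝ) < (2 : ℝ) ^ (-m) := by positivity
    have hsub1 : ballPiece F y m ⊆ ballPiece F x (m - 2) := by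
      apply Set.inter_subset_inter_right
      apply Metric.closedBall_subset_closedBall'
      have h1 : (2 : ℝ) ^ (-m + 1) = 2 * 2 ^ (-m) := by
        rw [zpow_add₀ (two_ne_zero), zpow_one]; ring
      have h2 : (2 : ℝ) ^ (-(m - 2)) = 4 * 2 ^ (-m) := by
        have : -(m - 2) = -m + 2 := by ring
        rw [this, zpow_add₀ (two_ne_zero)]; norm_num; ring
      rw [h2, dist_comm]
      rw [h1] at hd
      linarith
    have hK : aStar K F y m ≤ c ^ 2 * aStar K F x (m - 2) := by
      have e1 : ((2 : ℝ) ^ m) • ballPiece F x (m - 2)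
          = (2 : ℝ) • (2 : ℝ) • (((2 : ℝ) ^ (m - 2)) • ballPiece F x (m - 2)) := by
        rw [smul_smul, smul_smul]
        congr 1
        rw [show (2:ℝ) * 2 * (2:ℝ) ^ (m - 2) = (2:ℝ) ^ (2 + (m - 2)) by
          rw [zpow_add₀ (two_ne_zero : (2:ℝ) ≠ 0)]; norm_num]
        congr 1
        ring
      calc K (((2 : ℝ) ^ m) • ballPiece F y m)
          ≤ K (((2 : ℝ) ^ m) • ballPiece F x (m - 2)) :=
            hmono (Set.smul_set_mono hsub1)
        _ = K ((2 : ℝ) • (2 : ℝ) • (((2 : ℝ) ^ (m - 2)) • ballPiece F x (m - 2))) := by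
            rw [e1]
        _ ≤ c * K ((2 : ℝ) • (((2 : ℝ) ^ (m - 2)) • ballPiece F x (m - 2))) :=
            hscale _ 2 one_le_two le_rfl
        _ ≤ c * (c * K (((2 : ℝ) ^ (m - 2)) • ballPiece F x (m - 2))) := by
            gcongr
            exact hscale _ 2 one_le_two le_rfl
        _ = c ^ 2 * aStar K F x (m - 2) := by rw [aStar]; ring
    have hr : (2 : ℝ≥0∞) ^ (α * (m : ℝ))
        = (2 : ℝ≥0∞) ^ (2 * α) * (2 : ℝ≥0∞) ^ (α * ((m - 2 : ℤ) : ℝ)) := by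
      rw [← ENNReal.rpow_add _ _ (by norm_num) (by norm_num)]
      congr 1
      push_cast
      ring
    calc (2 : ℝ≥0∞) ^ (α * (m : ℝ)) * aStar K F y m
        ≤ (2 : ℝ≥0∞) ^ (α * (m : ℝ)) * (c ^ 2 * aStar K F x (m - 2)) := by gcongr
      _ = c' * ((2 : ℝ≥0∞) ^ (α * ((m - 2 : ℤ) : ℝ)) * aStar K F x (m - 2)) := by
          rw [hr, hc']; ring
  refine ⟨c', hc'pos, hc'top, ?_, ?_⟩
  · intro x hx l h1 h2
    calc ∑ m ∈ Finset.Icc (1 : ℤ) l, (2 : ℝ≥0∞) ^ (α * (m : ℝ)) * aStar K F y m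
        ≤ ∑ m ∈ Finset.Icc (1 : ℤ) l,
            c' * ((2 : ℝ≥0∞) ^ (α * ((m - 2 : ℤ) : ℝ)) * aStar K F x (m - 2)) := by
          apply Finset.sum_le_sum
          intro m hm
          apply key
          refine h2.trans ?_
          have hm' := (Finset.mem_Icc.mp hm).2
          exact zpow_le_zpow_right₀ (one_le_two) (by omega)
      _ = c' * ∑ m ∈ Finset.Icc (1 : ℤ) l,
            ((2 : ℝ≥0∞) ^ (α * ((m - 2 : ℤ) : ℝ)) * aStar K F x (m - 2)) := by
          rw [Finset.mul_sum]
      _ ≤ c' * WStar K α F x := by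
          gcongr
          exact sum_shift_le_tsum (fun m => (2 : ℝ≥0∞) ^ (α * (m : ℝ)) * aStar K F x m) _
  · refine ENNReal.tendsto_nhds_top fun n => ?_
    have hlt : (c' * n : ℝ≥0∞) < WStar K α F y := by
      rw [hWy]
      exact ENNReal.mul_lt_top hc'top.lt_top (by simp)
    rw [WStar, ENNReal.tsum_eq_iSup_sum] at hlt
    obtain ⟨s, hs⟩ := lt_iSup_iff.mp hlt
    have hev : ∀ᶠ x in nhdsWithin y Fᶜ, ∀ m ∈ s, dist x y ≤ (2 : ℝ) ^ (-m + 1) := by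
      apply Filter.Eventually.filter_mono nhdsWithin_le_nhds
      rw [Filter.eventually_all_finset]
      intro m _
      filter_upwards [Metric.closedBall_mem_nhds y (by positivity : (0:ℝ) < (2:ℝ) ^ (-m + 1))]
        with x hx using by simpa [Metric.mem_closedBall] using hx
    filter_upwards [hev] with x hx
    have hle : ∑ m ∈ s, (2 : ℝ≥0∞) ^ (α * (m : ℝ)) * aStar K F y m
        ≤ c' * WStar K α F x := by
      calc ∑ m ∈ s, (2 : ℝ≥0∞) ^ (α * (m : ℝ)) * aStar K F y m
          ≤ ∑ m ∈ s,
              c' * ((2 : ℝ≥0∞) ^ (α * ((m - 2 : ℤ) : ℝ)) * aStar K F x (m - 2)) :=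
            Finset.sum_le_sum fun m hm => key x m (hx m hm)
        _ = c' * ∑ m ∈ s,
              ((2 : ℝ≥0∞) ^ (α * ((m - 2 : ℤ) : ℝ)) * aStar K F x (m - 2)) := by
            rw [Finset.mul_sum]
        _ ≤ c' * WStar K α F x := by
            gcongr
            exact sum_shift_le_tsum (fun m => (2 : ℝ≥0∞) ^ (α * (m : ℝ)) * aStar K F x m) _
    have : c' * (n : ℝ≥0∞) < c' * WStar K α F x := lt_of_lt_of_le hs hle
    exact (ENNReal.mul_lt_mul_iff_right hc'pos.ne' hc'top).mp this
end

section
/- Let u be a positive C² solution of Δu = u^q on an open set D ⊆ ℝᴺ, with q > 1. Then for every x ∈ D, u(x) ≤ C · d(x, ∂D)^{−2/(q−1)}, where C = C(N,q) depends only on N and q (Keller–Osserman estimate). In particular, any solution u on D satisfies u(x) ≤ C·ρ(x)^{−2/(q−1)} where ρ(x) = dist(x, Dᶜ). -/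
set_option maxHeartbeats 1000000

open Filter Set Topology

section helpers
variable {E : Type*} [NormedAddCommGroup E] [NormedSpace ℝ E]

lemma line_path_hasDerivAt (y v : E) (t : ℝ) :
    HasDerivAt (fun s : ℝ => y + s • v) v t := by
  simpa using (((hasDerivAt_id t).smul_const v).const_add y)

lemma line_hasDerivAt {u : E → ℝ} {y v : E} {t : ℝ}
    (hu : DifferentiableAt ℝ u (y + t • v)) :
    HasDerivAt (fun s => u (y + s • v)) (fderiv ℝ u (y + t • v) v) t :=
  hu.hasFDerivAt.comp_hasDerivAt t (line_path_hasDerivAt y v t)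

lemma line_hasDerivAt2 {u : E → ℝ} {y v : E}
    (hu : DifferentiableAt ℝ (fderiv ℝ u) y) :
    HasDerivAt (fun s : ℝ => fderiv ℝ u (y + s • v) v)
      (fderiv ℝ (fderiv ℝ u) y v v) 0 := by
  have hγ := line_path_hasDerivAt y v 0
  have h1 : HasDerivAt (fun s : ℝ => fderiv ℝ u (y + s • v))
      (fderiv ℝ (fderiv ℝ u) y v) 0 := by
    have h0 : y + (0:ℝ) • v = y := by simp
    have h := (h0 ▸ hu.hasFDerivAt).comp_hasDerivAt (x := (0:ℝ)) hγ
    simpa [h0, Function.comp_def] using h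
  have h2 := h1.clm_apply (hasDerivAt_const (0:ℝ) v)
  simpa using h2
end helpers

lemma secondDeriv_nonpos_of_isLocalMax {g φ : ℝ → ℝ} {a : ℝ}
    (hmax : IsLocalMax g 0)
    (hg : ∀ᶠ t in 𝓝 (0:ℝ), HasDerivAt g (φ t) t)
    (hφ : HasDerivAt φ a 0) : a ≤ 0 := by
  by_contra hpos
  push_neg at hpos
  have h0 : φ 0 = 0 := hmax.hasDerivAt_eq_zero hg.self_of_nhds
  have hslope : Tendsto (fun t => φ t / t) (𝓝[≠] (0:ℝ)) (𝓝 a) := by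
    have := hasDerivAt_iff_tendsto_slope.1 hφ
    simpa [slope_fun_def_field, h0] using this
  have hev : ∀ᶠ t in 𝓝[≠] (0:ℝ), 0 < φ t / t :=
    hslope.eventually (eventually_gt_nhds hpos)
  obtain ⟨ε1, hε1, hball1⟩ := Metric.eventually_nhds_iff.1 (hg.and hmax)
  rw [eventually_nhdsWithin_iff] at hev
  obtain ⟨ε2, hε2, hball2⟩ := Metric.eventually_nhds_iff.1 hev
  set δ := min ε1 ε2 / 2 with hδdef
  have hδpos : 0 < δ := by positivity
  have hδ1 : δ < ε1 := by
    have h := min_le_left ε1 ε2; rw [hδdef]; linarith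
  have hδ2 : δ < ε2 := by
    have h := min_le_right ε1 ε2; rw [hδdef]; linarith
  -- On Icc 0 δ, g is strictly monotone
  have hmono : StrictMonoOn g (Icc 0 δ) := by
    apply strictMonoOn_of_deriv_pos (convex_Icc 0 δ)
    · intro t ht
      have hd : dist t (0:ℝ) < ε1 := by
        rw [Real.dist_eq, sub_zero, abs_of_nonneg ht.1]; linarith [ht.2]
      exact ((hball1 hd).1).continuousAt.continuousWithinAt
    · intro t ht
      rw [interior_Icc] at ht
      have htpos : 0 < t := ht.1
      have hd1 : dist t (0:ℝ) < ε1 := by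
        rw [Real.dist_eq, sub_zero, abs_of_pos htpos]; linarith [ht.2]
      have hd2 : dist t (0:ℝ) < ε2 := by
        rw [Real.dist_eq, sub_zero, abs_of_pos htpos]; linarith [ht.2]
      have hφt : 0 < φ t / t := hball2 hd2 (by simpa using ne_of_gt htpos)
      have : 0 < φ t := by
        have := mul_pos hφt htpos
        rwa [div_mul_cancel₀] at this
        exact ne_of_gt htpos
      rwa [(hball1 hd1).1.deriv]
  have hlt : g 0 < g δ := hmono (left_mem_Icc.2 hδpos.le) (right_mem_Icc.2 hδpos.le) hδpos
  have hle : g δ ≤ g 0 := by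
    have hd : dist δ (0:ℝ) < ε1 := by
      rw [Real.dist_eq, sub_zero, abs_of_pos hδpos]; exact hδ1
    exact (hball1 hd).2
  linarith

lemma direction_ineq {E : Type*} [NormedAddCommGroup E] [InnerProductSpace ℝ E]
    {u : E → ℝ} {y0 x : E} {R : ℝ} {k : ℕ} (hk2 : 2 ≤ k) {v : E} (hv : ‖v‖ = 1)
    (hu1 : ∀ᶠ y in 𝓝 y0, DifferentiableAt ℝ u y)
    (hu2 : DifferentiableAt ℝ (fderiv ℝ u) y0)
    (hmax : IsLocalMax (fun y => u y * (R ^ 2 - ‖y - x‖ ^ 2) ^ k) y0)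
    (hm0 : 0 < R ^ 2 - ‖y0 - x‖ ^ 2) (hu0 : 0 < u y0) :
    fderiv ℝ (fderiv ℝ u) y0 v v * (R ^ 2 - ‖y0 - x‖ ^ 2) ^ 2
      ≤ u y0 * (8 * (k:ℝ) ^ 2 * (inner ℝ (y0 - x) v : ℝ) ^ 2
          + 2 * (k:ℝ) * (R ^ 2 - ‖y0 - x‖ ^ 2)) := by
  have hk1 : 1 ≤ k := by omega
  set z : E := y0 - x with hz
  set b : ℝ := (inner ℝ z v : ℝ) with hb
  set m0 : ℝ := R ^ 2 - ‖z‖ ^ 2 with hm0def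
  set M : ℝ → ℝ := fun t => m0 - 2 * b * t - t ^ 2 with hM
  -- key identity
  have hkey : ∀ t : ℝ, R ^ 2 - ‖(y0 + t • v) - x‖ ^ 2 = M t := by
    intro t
    have h1 : (y0 + t • v) - x = z + t • v := by rw [hz]; abel
    rw [h1, norm_add_sq_real, real_inner_smul_right, norm_smul]
    simp only [hM, hv, norm_smul]
    rw [Real.norm_eq_abs]
    rw [mul_pow]
    rw [sq_abs]
    ring
  set γ : ℝ → E := fun t => y0 + t • v with hγ
  have hγcont : Continuous γ := by
    apply Continuous.add continuous_const
    exact (continuous_id.smul continuous_const)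
  have hγ0 : γ 0 = y0 := by simp [hγ]
  set g : ℝ → ℝ := fun t => u (γ t) * M t ^ k with hg
  -- g is local max at 0
  have hgmax : IsLocalMax g 0 := by
    have htend : Filter.Tendsto γ (𝓝 (0:ℝ)) (𝓝 y0) := by
      rw [← hγ0]; exact hγcont.continuousAt
    have h : IsMaxFilter (fun y => u y * (R ^ 2 - ‖y - x‖ ^ 2) ^ k) (𝓝 y0) (γ 0) := by
      rw [hγ0]; exact hmax
    have h2 := h.comp_tendsto htend
    have heq : ((fun y => u y * (R ^ 2 - ‖y - x‖ ^ 2) ^ k) ∘ γ) = g := by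
      funext t
      simp only [Function.comp, hg, hγ, hkey t]
    rw [IsLocalMax, IsMaxFilter]
    rw [← heq]
    exact h2
  -- derivative of M
  have hMd : ∀ t : ℝ, HasDerivAt M (-(2 * b) - 2 * t) t := by
    intro t
    have h1 : HasDerivAt (fun t : ℝ => 2 * b * t) (2 * b) t := by
      simpa using (hasDerivAt_id t).const_mul (2 * b)
    have h2 : HasDerivAt (fun t : ℝ => t ^ 2) (2 * t) t := by
      simpa using hasDerivAt_pow 2 t
    have := ((hasDerivAt_const t m0).fun_sub h1).fun_sub h2
    convert this using 1
    all_goals first | ring | rfl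
  -- derivative of g
  set p : E → ℝ := fun y => fderiv ℝ u y v with hp
  set φ : ℝ → ℝ := fun t => p (γ t) * M t ^ k
      + u (γ t) * ((k : ℝ) * M t ^ (k - 1) * (-(2 * b) - 2 * t)) with hφ
  have hgd : ∀ᶠ t in 𝓝 (0:ℝ), HasDerivAt g (φ t) t := by
    have htend : Filter.Tendsto γ (𝓝 (0:ℝ)) (𝓝 y0) := by
      rw [← hγ0]; exact hγcont.continuousAt
    filter_upwards [htend.eventually hu1] with t ht
    exact (line_hasDerivAt ht).mul ((hMd t).pow k)
  -- second derivative of g at 0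
  set p2 : ℝ := fderiv ℝ (fderiv ℝ u) y0 v v with hp2
  have hM0 : M 0 = m0 := by simp [hM]
  have hu0' : DifferentiableAt ℝ u (y0 + (0:ℝ) • v) := by
    simpa using hu1.self_of_nhds
  have hA : HasDerivAt (fun s : ℝ => p (γ s)) p2 0 := line_hasDerivAt2 hu2
  have hB : HasDerivAt (fun t => M t ^ k)
      ((k : ℝ) * M 0 ^ (k - 1) * (-(2 * b) - 2 * 0)) 0 := (hMd 0).pow k
  have hC : HasDerivAt (fun s : ℝ => u (γ s)) (p (γ 0)) 0 := by
    have := line_hasDerivAt hu0'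
    exact this
  have hlin : HasDerivAt (fun t : ℝ => -(2 * b) - 2 * t) (-2) 0 := by
    have h1 : HasDerivAt (fun t : ℝ => 2 * t) 2 0 := by
      simpa using (hasDerivAt_id (0:ℝ)).const_mul 2
    simpa using (hasDerivAt_const (0:ℝ) (-(2*b))).fun_sub h1
  have hD : HasDerivAt (fun t => (k : ℝ) * M t ^ (k - 1))
      ((k:ℝ) * (((k-1 : ℕ) : ℝ) * M 0 ^ (k - 1 - 1) * (-(2 * b) - 2 * 0))) 0 :=
    ((hMd 0).pow (k-1)).const_mul (k:ℝ)
  have hE := (hD.fun_mul hlin)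
  have hψ := (hA.fun_mul hB).fun_add (hC.fun_mul hE)
  have hψle : _ ≤ (0:ℝ) := secondDeriv_nonpos_of_isLocalMax hgmax hgd hψ
  have hφ0 : φ 0 = 0 := hgmax.hasDerivAt_eq_zero hgd.self_of_nhds
  clear hψ hgd hgmax hMd hkey hmax hu1 hu2 hA hB hC hD hE hlin hu0' hγcont
  set κ : ℝ := (k : ℝ) with hκ
  have hκ2 : (2:ℝ) ≤ κ := by rw [hκ]; exact_mod_cast hk2
  set P : ℝ := p y0 with hP
  set u0 : ℝ := u y0 with hu0def
  set c : ℝ := m0 ^ (k - 2) with hc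
  have hcpos : 0 < c := pow_pos hm0 _
  have hcast : ((k - 1 : ℕ) : ℝ) = κ - 1 := by
    rw [Nat.cast_sub hk1]; norm_num [hκ]
  have hpow1 : m0 ^ k = c * m0 ^ 2 := by
    rw [hc, ← pow_add]; congr 1; omega
  have hpow2 : m0 ^ (k - 1) = c * m0 := by
    rw [hc, ← pow_succ]; congr 1; omega
  have hpow3 : m0 ^ (k - 1 - 1) = c := by
    rw [hc]; congr 1
  simp only [hγ0, hM0, hφ, mul_zero, sub_zero] at hψle hφ0
  rw [hpow1, hpow2, hpow3, hcast] at hψle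
  rw [hpow1, hpow2] at hφ0
  -- from the first-order condition: P * m0 = 2 * b * κ * u0
  have e1 : c * (m0 * (P * m0 - 2 * b * κ * u0)) = 0 := by
    linear_combination hφ0
  have e2 : P * m0 - 2 * b * κ * u0 = 0 := by
    rcases mul_eq_zero.1 e1 with h | h
    · exact absurd h hcpos.ne'
    · rcases mul_eq_zero.1 h with h' | h'
      · exact absurd h' hm0.ne'
      · exact h'
  have hPm : P * m0 = 2 * b * κ * u0 := by linarith
  -- from the second-order condition
  set Y : ℝ := p2 * m0 ^ 2 - 4 * b * κ * (P * m0)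
      + u0 * (4 * b ^ 2 * κ * (κ - 1) - 2 * κ * m0) with hY
  have hYle : Y ≤ 0 := by
    have h1 : c * Y ≤ c * 0 := by
      rw [mul_zero]
      calc c * Y = p2 * (c * m0 ^ 2) + P * (κ * (c * m0) * -(2 * b)) +
          (P * (κ * (c * m0) * -(2 * b)) +
            u0 * (κ * ((κ - 1) * c * -(2 * b)) * -(2 * b) + κ * (c * m0) * -2)) := by
            rw [hY]; ring
        _ ≤ 0 := hψle
    exact le_of_mul_le_mul_left h1 hcpos
  have h3 : p2 * m0 ^ 2 ≤ 4 * b * κ * (P * m0)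
      - u0 * (4 * b ^ 2 * κ * (κ - 1) - 2 * κ * m0) := by
    rw [hY] at hYle; linarith
  rw [hPm] at h3
  have hκ1 : (0:ℝ) ≤ κ - 1 := by linarith
  have hfin : 0 ≤ 4 * b ^ 2 * κ * (κ - 1) * u0 :=
    mul_nonneg (mul_nonneg (mul_nonneg (by positivity) (by linarith)) hκ1) hu0.le
  nlinarith [h3, hfin]

open scoped ENNReal

/-- The Laplacian of `u : ℝᴺ → ℝ`, as the trace of the second derivative. -/
noncomputable def laplacian {N : ℕ} (u : EuclideanSpace ℝ (Fin N) → ℝ)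
    (x : EuclideanSpace ℝ (Fin N)) : ℝ :=
  ∑ i : Fin N, iteratedFDeriv ℝ 2 u x
    ![EuclideanSpace.single i (1 : ℝ), EuclideanSpace.single i (1 : ℝ)]

/-- Keller–Osserman estimate: every positive C² solution of `Δu = u^q`, `q > 1`, on an
open set `D` satisfies `u(x) ≤ C(N,q) · dist(x, Dᶜ)^{−2/(q−1)}`. -/
theorem keller_osserman (N : ℕ) (hN : 1 ≤ N) (q : ℝ) (hq : 1 < q) :
    ∃ C : ℝ, 0 < C ∧
      ∀ (D : Set (EuclideanSpace ℝ (Fin N))), IsOpen D → Dᶜ.Nonempty →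
      ∀ u : EuclideanSpace ℝ (Fin N) → ℝ,
        ContDiffOn ℝ 2 u D →
        (∀ x ∈ D, 0 < u x) →
        (∀ x ∈ D, laplacian u x = u x ^ q) →
        ∀ x ∈ D, u x ≤ C * Metric.infDist x Dᶜ ^ (-2 / (q - 1)) := by
  have hq1 : 0 < q - 1 := by linarith
  set k : ℕ := max 2 ⌈2 / (q - 1)⌉₊ with hkdef
  have hk2 : 2 ≤ k := le_max_left _ _
  have hkq : 2 / (q - 1) ≤ (k : ℝ) := by
    refine le_trans (Nat.le_ceil _) ?_
    exact_mod_cast Nat.cast_le.2 (le_max_right 2 ⌈2 / (q - 1)⌉₊)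
  set κ : ℝ := (k : ℝ) with hκdef
  have hκ2 : (2:ℝ) ≤ κ := by rw [hκdef]; exact_mod_cast hk2
  set K : ℝ := 8 * κ ^ 2 + 2 * N * κ with hKdef
  have hKpos : 0 < K := by positivity
  set e : ℝ := 1 / (q - 1) with hedef
  have hepos : 0 < e := by positivity
  refine ⟨K ^ e * 2 ^ (2 * e), by positivity, ?_⟩
  intro D hD hDc u hu hupos hlap x hx
  set ρ := Metric.infDist x Dᶜ with hρ
  have hρpos : 0 < ρ :=
    (hD.isClosed_compl.notMem_iff_infDist_pos hDc).1 (by simpa using hx)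
  set R := ρ / 2 with hRdef
  have hRpos : 0 < R := by positivity
  have hball : Metric.closedBall x R ⊆ D := by
    intro y hy
    by_contra hyD
    have h1 : ρ ≤ dist x y := Metric.infDist_le_dist_of_mem (by simpa using hyD)
    have h2 : dist y x ≤ R := Metric.mem_closedBall.1 hy
    rw [dist_comm] at h1
    rw [hRdef] at h2
    linarith
  set X : ℝ := R ^ 2 with hXdef
  have hXpos : 0 < X := by positivity
  set m : EuclideanSpace ℝ (Fin N) → ℝ := fun y => R ^ 2 - ‖y - x‖ ^ 2 with hm
  set w : EuclideanSpace ℝ (Fin N) → ℝ := fun y => u y * m y ^ k with hw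
  have hwc : ContinuousOn w (Metric.closedBall x R) := by
    apply ContinuousOn.mul (hu.continuousOn.mono hball)
    apply Continuous.continuousOn
    fun_prop
  obtain ⟨y0, hy0mem, hy0max⟩ :=
    (isCompact_closedBall x R).exists_isMaxOn
      ⟨x, Metric.mem_closedBall_self hRpos.le⟩ hwc
  have hy0D : y0 ∈ D := hball hy0mem
  have hu0 : 0 < u y0 := hupos y0 hy0D
  have hwx : w x = u x * X ^ k := by
    simp [hw, hm, hXdef]
  have hwxpos : 0 < w x := by
    rw [hwx]; exact mul_pos (hupos x hx) (pow_pos hXpos k)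
  have hwy0 : w x ≤ w y0 := hy0max (Metric.mem_closedBall_self hRpos.le)
  set m0 : ℝ := R ^ 2 - ‖y0 - x‖ ^ 2 with hm0def
  have hm0nonneg : 0 ≤ m0 := by
    have := Metric.mem_closedBall.1 hy0mem
    rw [dist_eq_norm] at this
    have h2 : ‖y0 - x‖ ^ 2 ≤ R ^ 2 := by
      apply pow_le_pow_left₀ (norm_nonneg _) this
    rw [hm0def]; linarith
  have hm0pos : 0 < m0 := by
    rcases eq_or_lt_of_le hm0nonneg with h | h
    · exfalso
      have hmy0 : m y0 = 0 := by rw [hm]; rw [hm0def] at h; linarith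
      have hk0 : k ≠ 0 := by omega
      have : w y0 = 0 := by simp [hw, hmy0, zero_pow hk0]
      linarith
    · exact h
  have hy0ball : y0 ∈ Metric.ball x R := by
    rw [Metric.mem_ball, dist_eq_norm]
    nlinarith [norm_nonneg (y0 - x), hm0pos, hRpos]
  have hlocmax : IsLocalMax w y0 :=
    hy0max.isLocalMax (Filter.mem_of_superset
      (Metric.isOpen_ball.mem_nhds hy0ball) Metric.ball_subset_closedBall)
  have hu1 : ∀ᶠ y in nhds y0, DifferentiableAt ℝ u y := by
    filter_upwards [hD.mem_nhds hy0D] with y hy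
    exact (hu.contDiffAt (hD.mem_nhds hy)).differentiableAt two_ne_zero
  have hu2 : DifferentiableAt ℝ (fderiv ℝ u) y0 := by
    have hCD : ContDiffAt ℝ 2 u y0 := hu.contDiffAt (hD.mem_nhds hy0D)
    exact (hCD.fderiv_right (m := 1) (by norm_num)).differentiableAt one_ne_zero
  set z := y0 - x with hz
  have hzR : ‖z‖ ^ 2 ≤ X := by
    rw [hXdef]; linarith [hm0pos, hm0def.symm.le, hm0def.le]
  have hm0X : m0 ≤ X := by
    rw [hXdef]; linarith [hm0def.le, sq_nonneg ‖z‖]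
  -- per-direction inequality, summed
  set p2 : Fin N → ℝ := fun i => fderiv ℝ (fderiv ℝ u) y0
      (EuclideanSpace.single i (1:ℝ)) (EuclideanSpace.single i (1:ℝ)) with hp2
  have hdir : ∀ i : Fin N, p2 i * m0 ^ 2
      ≤ u y0 * (8 * κ ^ 2 * (inner ℝ z (EuclideanSpace.single i (1:ℝ)) : ℝ) ^ 2
          + 2 * κ * m0) := by
    intro i
    exact direction_ineq hk2 (by simp) hu1 hu2 hlocmax (by rw [← hm0def]; exact hm0pos) hu0
  have hsum := Finset.sum_le_sum (fun i (_ : i ∈ Finset.univ) => hdir i)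
  have hinner : ∀ i : Fin N, (inner ℝ z (EuclideanSpace.single i (1:ℝ)) : ℝ) = z i := by
    intro i
    rw [EuclideanSpace.inner_single_right]
    simp
  have hnormsq : ∑ i : Fin N, (z i) ^ 2 = ‖z‖ ^ 2 := by
    rw [← real_inner_self_eq_norm_sq, PiLp.inner_apply]
    simp [sq]
  have hlapsum : ∑ i : Fin N, p2 i = u y0 ^ q := by
    rw [← hlap y0 hy0D, laplacian]
    apply Finset.sum_congr rfl
    intro i _
    rw [iteratedFDeriv_two_apply]
    simp [hp2]
  -- combine
  have hKRineq : u y0 ^ q * m0 ^ 2 ≤ u y0 * (K * X) := by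
    have hL : ∑ i : Fin N, p2 i * m0 ^ 2 = u y0 ^ q * m0 ^ 2 := by
      rw [← Finset.sum_mul, hlapsum]
    have hRr : ∑ i : Fin N,
        u y0 * (8 * κ ^ 2 * (inner ℝ z (EuclideanSpace.single i (1:ℝ)) : ℝ) ^ 2 + 2 * κ * m0)
        = u y0 * (8 * κ ^ 2 * ‖z‖ ^ 2 + N * (2 * κ * m0)) := by
      simp_rw [hinner]
      rw [← Finset.mul_sum]
      congr 1
      rw [Finset.sum_add_distrib, Finset.sum_const, Finset.card_univ, Fintype.card_fin]
      rw [← Finset.mul_sum, hnormsq]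
      ring
    rw [hL, hRr] at hsum
    refine le_trans hsum ?_
    have h8 : 8 * κ ^ 2 * ‖z‖ ^ 2 + N * (2 * κ * m0) ≤ K * X := by
      rw [hKdef]
      have h1 : 8 * κ ^ 2 * ‖z‖ ^ 2 ≤ 8 * κ ^ 2 * X :=
        mul_le_mul_of_nonneg_left hzR (by positivity)
      have h2 : (N:ℝ) * (2 * κ * m0) ≤ (N:ℝ) * (2 * κ * X) := by
        apply mul_le_mul_of_nonneg_left _ (Nat.cast_nonneg N)
        have : (0:ℝ) ≤ 2 * κ := by linarith
        nlinarith
      nlinarith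
    exact mul_le_mul_of_nonneg_left h8 hu0.le
  -- endgame: rpow algebra
  have hwy0eq : w y0 = u y0 * m0 ^ k := by
    simp only [hw, hm]; rfl
  have h1 : u y0 ^ (q - 1) ≤ K * X / m0 ^ 2 := by
    rw [Real.rpow_sub hu0, Real.rpow_one, div_le_div_iff₀ hu0 (by positivity)]
    linarith [hKRineq]
  have h2 : u y0 ≤ (K * X / m0 ^ 2) ^ e := by
    have heq : u y0 = (u y0 ^ (q - 1)) ^ e := by
      rw [← Real.rpow_mul hu0.le]
      rw [show (q - 1) * e = 1 by rw [hedef]; field_simp]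
      rw [Real.rpow_one]
    rw [heq]
    exact Real.rpow_le_rpow (Real.rpow_nonneg hu0.le _) h1 hepos.le
  have h3 : u x * X ^ k ≤ u y0 * m0 ^ k := by
    rw [← hwx, ← hwy0eq]; exact hwy0
  have h4 : u x * X ^ κ ≤ (K * X / m0 ^ 2) ^ e * m0 ^ κ := by
    rw [hκdef, Real.rpow_natCast, Real.rpow_natCast]
    exact le_trans h3 (mul_le_mul_of_nonneg_right h2 (pow_nonneg hm0pos.le k))
  have hRHS : (K * X / m0 ^ 2) ^ e * m0 ^ κ = K ^ e * X ^ e * m0 ^ (κ - 2 * e) := by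
    rw [Real.div_rpow (by positivity) (by positivity),
      Real.mul_rpow hKpos.le hXpos.le]
    rw [← Real.rpow_natCast m0 2, ← Real.rpow_mul hm0pos.le]
    rw [div_mul_eq_mul_div, mul_div_assoc, ← Real.rpow_sub hm0pos]
    norm_num
  have hexp : 0 ≤ κ - 2 * e := by
    have h2e : 2 * e = 2 / (q - 1) := by rw [hedef]; ring
    linarith [hkq]
  have h5 : u x * X ^ κ ≤ K ^ e * X ^ (κ - e) := by
    calc u x * X ^ κ ≤ K ^ e * X ^ e * m0 ^ (κ - 2 * e) := by rw [← hRHS]; exact h4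
      _ ≤ K ^ e * X ^ e * X ^ (κ - 2 * e) := by
          apply mul_le_mul_of_nonneg_left
            (Real.rpow_le_rpow hm0pos.le hm0X hexp) (by positivity)
      _ = K ^ e * X ^ (κ - e) := by
          rw [mul_assoc, ← Real.rpow_add hXpos]
          rw [show e + (κ - 2 * e) = κ - e by ring]
  have h6 : u x ≤ K ^ e * X ^ (κ - e) / X ^ κ := by
    rw [le_div_iff₀ (Real.rpow_pos_of_pos hXpos κ)]; exact h5
  have h7 : K ^ e * X ^ (κ - e) / X ^ κ = K ^ e * X ^ (-e) := by
    rw [mul_div_assoc, ← Real.rpow_sub hXpos,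
      show κ - e - κ = -e by ring]
  have hXR : X ^ (-e) = R ^ (-(2 * e)) := by
    rw [hXdef, ← Real.rpow_natCast R 2, ← Real.rpow_mul hRpos.le]
    congr 1
    push_cast
    ring
  have hRρ : R ^ (-(2 * e)) = ρ ^ (-(2 * e)) * 2 ^ (2 * e) := by
    rw [hRdef, Real.div_rpow hρpos.le (by norm_num : (0:ℝ) ≤ 2)]
    rw [Real.rpow_neg (by norm_num : (0:ℝ) ≤ 2), div_eq_mul_inv, inv_inv]
  have hfinal : u x ≤ K ^ e * 2 ^ (2 * e) * ρ ^ (-(2 * e)) := by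
    calc u x ≤ K ^ e * X ^ (κ - e) / X ^ κ := h6
      _ = K ^ e * X ^ (-e) := h7
      _ = K ^ e * (ρ ^ (-(2 * e)) * 2 ^ (2 * e)) := by rw [hXR, hRρ]
      _ = K ^ e * 2 ^ (2 * e) * ρ ^ (-(2 * e)) := by ring
  have hexpeq : -2 / (q - 1) = -(2 * e) := by rw [hedef]; ring
  rw [hexpeq]
  exact hfinal
end

section
/- Let u be a positive C² function on the open unit ball B ⊆ ℝᴺ satisfying Δu ≥ u^q with q > 1 (a subsolution), and let w(x) = Λ(1−|x|²)^{−2/(q−1)} for a suitable constant Λ = Λ(N,q) > 0 chosen so that Δw ≤ w^q on B. Then u ≤ w on B. In particular every solution of Δu = u^q on B satisfies u(0) ≤ Λ. -/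
open Metric Filter Set Real
open scoped Topology RealInnerProductSpace


variable {N : ℕ}

lemma hasFDerivAt_s (r : ℝ) (y : EuclideanSpace ℝ (Fin N)) :
    HasFDerivAt (fun z : EuclideanSpace ℝ (Fin N) => r ^ 2 - ‖z‖ ^ 2)
      ((-2 : ℝ) • innerSL ℝ y) y := by
  have h1 : HasFDerivAt (fun z : EuclideanSpace ℝ (Fin N) => ‖z‖ ^ 2)
      ((2:ℕ) • innerSL ℝ y) y := by
    simpa using (hasFDerivAt_id y).norm_sq
  have := (hasFDerivAt_const (r ^ 2) y).sub h1
  refine this.congr_fderiv ?_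
  ext v
  simp

lemma spos {r : ℝ} {y : EuclideanSpace ℝ (Fin N)} (hy : ‖y‖ < r) : 0 < r ^ 2 - ‖y‖ ^ 2 := by
  have h0 : (0:ℝ) ≤ ‖y‖ := norm_nonneg _
  nlinarith

-- first derivative of W
lemma hasFDerivAt_W (a r p : ℝ) {y : EuclideanSpace ℝ (Fin N)} (hy : ‖y‖ < r) :
    HasFDerivAt (fun z : EuclideanSpace ℝ (Fin N) => a * (r ^ 2 - ‖z‖ ^ 2) ^ p)
      ((-2 * a * p * (r ^ 2 - ‖y‖ ^ 2) ^ (p - 1)) • innerSL ℝ y) y := by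
  have hs := spos hy
  have h3 : HasDerivAt (fun t : ℝ => t ^ p) (p * (r ^ 2 - ‖y‖ ^ 2) ^ (p - 1))
      (r ^ 2 - ‖y‖ ^ 2) := Real.hasDerivAt_rpow_const (Or.inl hs.ne')
  have h4 := (h3.comp_hasFDerivAt y (hasFDerivAt_s r y)).const_mul a
  refine h4.congr_fderiv ?_
  ext v; simp; ring

lemma contDiffOn_W (a r p : ℝ) :
    ContDiffOn ℝ 2 (fun z : EuclideanSpace ℝ (Fin N) => a * (r ^ 2 - ‖z‖ ^ 2) ^ p)
      (Metric.ball 0 r) := by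
  intro y hy
  rw [mem_ball_zero_iff] at hy
  have hs := spos hy
  refine ContDiffAt.contDiffWithinAt ?_
  exact ((Real.contDiffAt_rpow_const_of_ne hs.ne').comp y
    ((contDiff_const.sub (contDiff_norm_sq ℝ)).contDiffAt)).const_smul a

lemma differentiableAt_fderiv {f : EuclideanSpace ℝ (Fin N) → ℝ} {U : Set (EuclideanSpace ℝ (Fin N))}
    (hU : IsOpen U) (hf : ContDiffOn ℝ 2 f U) {x : EuclideanSpace ℝ (Fin N)} (hx : x ∈ U) :
    DifferentiableAt ℝ (fderiv ℝ f) x := by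
  have h1 : ContDiffOn ℝ 1 (fderiv ℝ f) U := hf.fderiv_of_isOpen hU (by norm_num)
  exact (h1.differentiableOn one_ne_zero).differentiableAt (hU.mem_nhds hx)

lemma second_deriv_apply {f : EuclideanSpace ℝ (Fin N) → ℝ} {U : Set (EuclideanSpace ℝ (Fin N))}
    (hU : IsOpen U) (hf : ContDiffOn ℝ 2 f U) {x : EuclideanSpace ℝ (Fin N)} (hx : x ∈ U)
    (v w : EuclideanSpace ℝ (Fin N)) :
    fderiv ℝ (fderiv ℝ f) x v w = fderiv ℝ (fun y => fderiv ℝ f y w) x v := by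
  rw [fderiv_clm_apply (differentiableAt_fderiv hU hf hx) (differentiableAt_const w)]
  simp

lemma laplacian_eq {f : EuclideanSpace ℝ (Fin N) → ℝ} (x : EuclideanSpace ℝ (Fin N)) :
    laplacian f x = ∑ i : Fin N,
      fderiv ℝ (fderiv ℝ f) x (EuclideanSpace.single i (1:ℝ)) (EuclideanSpace.single i (1:ℝ)) := by
  unfold laplacian
  refine Finset.sum_congr rfl fun i _ => ?_
  rw [iteratedFDeriv_two_apply]
  simp

lemma sum_coord_sq (x : EuclideanSpace ℝ (Fin N)) : ∑ i : Fin N, x i ^ 2 = ‖x‖ ^ 2 := by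
  rw [EuclideanSpace.norm_eq, Real.sq_sqrt]
  · simp [Real.norm_eq_abs, sq_abs]
  · positivity

lemma laplacian_W (a r p : ℝ) {x : EuclideanSpace ℝ (Fin N)} (hx : ‖x‖ < r) :
    laplacian (fun z : EuclideanSpace ℝ (Fin N) => a * (r ^ 2 - ‖z‖ ^ 2) ^ p) x
      = 4 * a * p * (p - 1) * (r ^ 2 - ‖x‖ ^ 2) ^ (p - 2) * ‖x‖ ^ 2
        + (-2 * a * p * (r ^ 2 - ‖x‖ ^ 2) ^ (p - 1)) * N := by
  have hs := spos hx
  have hxU : x ∈ Metric.ball (0 : EuclideanSpace ℝ (Fin N)) r := mem_ball_zero_iff.2 hx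
  rw [laplacian_eq]
  have key : ∀ i : Fin N,
      fderiv ℝ (fderiv ℝ (fun z : EuclideanSpace ℝ (Fin N) => a * (r ^ 2 - ‖z‖ ^ 2) ^ p)) x
        (EuclideanSpace.single i (1:ℝ)) (EuclideanSpace.single i (1:ℝ))
      = 4 * a * p * (p - 1) * (r ^ 2 - ‖x‖ ^ 2) ^ (p - 2) * x i ^ 2
        + (-2 * a * p * (r ^ 2 - ‖x‖ ^ 2) ^ (p - 1)) := by
    intro i
    rw [second_deriv_apply Metric.isOpen_ball (contDiffOn_W a r p) hxU]
    have hev : (fun y => fderiv ℝ (fun z : EuclideanSpace ℝ (Fin N) => a * (r ^ 2 - ‖z‖ ^ 2) ^ p) y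
          (EuclideanSpace.single i (1:ℝ)))
        =ᶠ[𝓝 x] fun y => (-2 * a * p * (r ^ 2 - ‖y‖ ^ 2) ^ (p - 1)) *
          ⟪y, (EuclideanSpace.single i (1:ℝ) : EuclideanSpace ℝ (Fin N))⟫ := by
      filter_upwards [Metric.isOpen_ball.mem_nhds hxU] with y hy
      rw [(hasFDerivAt_W a r p (mem_ball_zero_iff.1 hy)).fderiv]
      simp only [ContinuousLinearMap.smul_apply, innerSL_apply_apply, smul_eq_mul]
    rw [hev.fderiv_eq]
    have hc : HasFDerivAt (fun y : EuclideanSpace ℝ (Fin N) =>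
          -2 * a * p * (r ^ 2 - ‖y‖ ^ 2) ^ (p - 1))
        ((-2 * (-2 * a * p) * (p - 1) * (r ^ 2 - ‖x‖ ^ 2) ^ (p - 1 - 1)) • innerSL ℝ x) x := by
      have := hasFDerivAt_W (-2 * a * p) r (p - 1) hx
      convert this using 2
    have hι : HasFDerivAt (fun y : EuclideanSpace ℝ (Fin N) =>
          ⟪y, (EuclideanSpace.single i (1:ℝ) : EuclideanSpace ℝ (Fin N))⟫)
        (innerSL ℝ (EuclideanSpace.single i (1:ℝ) : EuclideanSpace ℝ (Fin N))) x := by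
      have heq : (fun y : EuclideanSpace ℝ (Fin N) =>
          ⟪y, (EuclideanSpace.single i (1:ℝ) : EuclideanSpace ℝ (Fin N))⟫)
          = fun y => innerSL ℝ (EuclideanSpace.single i (1:ℝ) : EuclideanSpace ℝ (Fin N)) y := by
        funext y
        simp [real_inner_comm]
      rw [heq]
      exact (innerSL ℝ _).hasFDerivAt
    erw [(hc.mul hι).fderiv]
    have h1 : ⟪x, (EuclideanSpace.single i (1:ℝ) : EuclideanSpace ℝ (Fin N))⟫ = x i := by
      simp [EuclideanSpace.inner_single_right]
    have h2 : ⟪(EuclideanSpace.single i (1:ℝ) : EuclideanSpace ℝ (Fin N)),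
        (EuclideanSpace.single i (1:ℝ) : EuclideanSpace ℝ (Fin N))⟫ = 1 := by
      simp [EuclideanSpace.inner_single_right, EuclideanSpace.single_apply]
    have h3 : p - 1 - 1 = p - 2 := by ring
    simp only [ContinuousLinearMap.add_apply, ContinuousLinearMap.smul_apply,
      innerSL_apply_apply, h1, h2, h3, smul_eq_mul]
    ring
  rw [Finset.sum_congr rfl fun i _ => key i, Finset.sum_add_distrib, ← Finset.mul_sum,
    sum_coord_sq, Finset.sum_const, Finset.card_univ, Fintype.card_fin, nsmul_eq_mul]
  ring

lemma W_supersol {q : ℝ} (hq : 1 < q) {Λ r : ℝ} (hΛ : 0 < Λ) (hr : 0 < r)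
    (hC : 4 * (2/(q-1)) * (2/(q-1) + 1) + 2 * (2/(q-1)) * N ≤ Λ ^ (q-1))
    {x : EuclideanSpace ℝ (Fin N)} (hx : ‖x‖ < r) :
    laplacian (fun z : EuclideanSpace ℝ (Fin N) =>
        Λ * r ^ (2/(q-1)) * (r ^ 2 - ‖z‖ ^ 2) ^ (-(2/(q-1)))) x
      ≤ (Λ * r ^ (2/(q-1)) * (r ^ 2 - ‖x‖ ^ 2) ^ (-(2/(q-1)))) ^ q := by
  have hq1 : 0 < q - 1 := by linarith
  set α := 2/(q-1) with hαdef
  have hα : 0 < α := by positivity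
  set a := Λ * r ^ α with hadef
  have ha : 0 < a := mul_pos hΛ (Real.rpow_pos_of_pos hr α)
  have hs : 0 < r ^ 2 - ‖x‖ ^ 2 := spos hx
  set s := r ^ 2 - ‖x‖ ^ 2 with hsdef
  rw [laplacian_W a r (-α) hx]
  have e1 : s ^ (-α - 1) = s ^ (-α - 2) * s := by
    rw [show -α - 1 = (-α - 2) + 1 by ring, Real.rpow_add_one hs.ne']
  have hx2 : ‖x‖ ^ 2 ≤ r ^ 2 := by nlinarith [hs]
  have hsle : s ≤ r ^ 2 := by nlinarith [sq_nonneg ‖x‖]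
  have hsp : (0:ℝ) < s ^ (-α - 2) := Real.rpow_pos_of_pos hs _
  have e2 : (a * s ^ (-α)) ^ q = Λ ^ (q-1) * (a * r ^ 2) * s ^ (-α - 2) := by
    rw [Real.mul_rpow ha.le (Real.rpow_pos_of_pos hs _).le, ← Real.rpow_mul hs.le]
    have hαq : (-α) * q = -α - 2 := by
      rw [hαdef]; field_simp; ring
    rw [hαq]
    have e3 : a ^ q = Λ ^ (q-1) * (a * r ^ ((2:ℕ):ℝ)) := by
      rw [show q = (q-1) + 1 by ring, Real.rpow_add ha, Real.rpow_one, hadef,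
        Real.mul_rpow hΛ.le (Real.rpow_pos_of_pos hr _).le, ← Real.rpow_mul hr.le]
      have h5 : α * (q - 1) = ((2:ℕ):ℝ) := by
        rw [hαdef]; push_cast; field_simp
      rw [h5, show q - 1 + 1 - 1 = q - 1 by ring]
      ring
    rw [Real.rpow_natCast] at e3
    rw [e3]
  rw [e2, e1]
  have step1 : 4 * a * (-α) * (-α - 1) * s ^ (-α - 2) * ‖x‖ ^ 2
      + -2 * a * (-α) * (s ^ (-α - 2) * s) * N
      = (4 * a * α * (α + 1) * ‖x‖ ^ 2 + 2 * a * α * N * s) * s ^ (-α - 2) := by ring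
  rw [step1]
  refine mul_le_mul_of_nonneg_right ?_ hsp.le
  have t1 : 4 * a * α * (α + 1) * ‖x‖ ^ 2 ≤ 4 * a * α * (α + 1) * r ^ 2 :=
    mul_le_mul_of_nonneg_left hx2 (by positivity)
  have t2 : 2 * a * α * N * s ≤ 2 * a * α * N * r ^ 2 :=
    mul_le_mul_of_nonneg_left hsle (by positivity)
  have t4 : (4 * α * (α + 1) + 2 * α * N) * (a * r ^ 2) ≤ Λ ^ (q-1) * (a * r ^ 2) :=
    mul_le_mul_of_nonneg_right hC (by positivity)
  nlinarith [t1, t2, t4]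

lemma second_deriv_nonpos_of_isLocalMax {φ ψ : ℝ → ℝ} {c : ℝ}
    (hmax : IsLocalMax φ 0) (hd : ∀ᶠ t in 𝓝 (0:ℝ), HasDerivAt φ (ψ t) t)
    (hψ : HasDerivAt ψ c 0) : c ≤ 0 := by
  by_contra hcon
  push_neg at hcon
  have hψ0 : ψ 0 = 0 := hmax.hasDerivAt_eq_zero hd.self_of_nhds
  have hslope := hasDerivAt_iff_tendsto_slope.1 hψ
  have hpos : ∀ᶠ t in 𝓝[≠] (0:ℝ), 0 < slope ψ 0 t := hslope.eventually (eventually_gt_nhds hcon)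
  have hpos' : ∀ᶠ t in 𝓝 (0:ℝ), t ≠ 0 → 0 < slope ψ 0 t := by
    rw [eventually_nhdsWithin_iff] at hpos
    exact hpos.mono fun t h ht => h (Set.mem_compl_singleton_iff.2 ht)
  have H : ∀ᶠ t in 𝓝 (0:ℝ), (HasDerivAt φ (ψ t) t ∧ φ t ≤ φ 0) ∧ (t ≠ 0 → 0 < slope ψ 0 t) :=
    (hd.and hmax).and hpos'
  obtain ⟨δ, hδ, h1⟩ := Metric.eventually_nhds_iff.1 H
  set b := δ / 2 with hb
  have hbδ : b < δ := by simp [hb]; linarith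
  have hb0 : 0 < b := by positivity
  have hmem : ∀ t ∈ Icc (0:ℝ) b, dist t 0 < δ := by
    intro t ht
    rw [Real.dist_eq, sub_zero, abs_of_nonneg ht.1]
    exact lt_of_le_of_lt ht.2 hbδ
  have hmono : StrictMonoOn φ (Icc (0:ℝ) b) := by
    apply strictMonoOn_of_deriv_pos (convex_Icc _ _)
    · intro t ht
      exact ((h1 (hmem t ht)).1.1).continuousAt.continuousWithinAt
    · intro t ht
      rw [interior_Icc] at ht
      have h2 := h1 (hmem t ⟨ht.1.le, ht.2.le⟩)
      rw [h2.1.1.deriv]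
      have hsl := h2.2 (ne_of_gt ht.1)
      rw [slope_def_field, hψ0, sub_zero, sub_zero] at hsl
      have := mul_pos hsl ht.1
      rwa [div_mul_cancel₀] at this
      exact ne_of_gt ht.1
  have hlt : φ 0 < φ b := hmono (by constructor <;> [rfl; exact hb0.le] ) (by constructor <;> [exact hb0.le; rfl]) hb0
  have hle : φ b ≤ φ 0 := (h1 (by rw [Real.dist_eq, sub_zero, abs_of_pos hb0]; exact hbδ)).1.2
  linarith

lemma line_hasDerivAt_s15 {G : EuclideanSpace ℝ (Fin N) → ℝ} {G' : EuclideanSpace ℝ (Fin N) →L[ℝ] ℝ}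
    {x₀ v : EuclideanSpace ℝ (Fin N)} {t : ℝ}
    (h : HasFDerivAt G G' (x₀ + t • v)) : HasDerivAt (fun s : ℝ => G (x₀ + s • v)) (G' v) t := by
  have hline : HasDerivAt (fun s : ℝ => x₀ + s • v) v t := by
    simpa using ((hasDerivAt_id t).smul_const v).const_add x₀
  exact h.comp_hasDerivAt t hline

lemma laplacian_le_at_localMax {f g : EuclideanSpace ℝ (Fin N) → ℝ}
    {U : Set (EuclideanSpace ℝ (Fin N))} (hU : IsOpen U)
    (hf : ContDiffOn ℝ 2 f U) (hg : ContDiffOn ℝ 2 g U)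
    {x₀ : EuclideanSpace ℝ (Fin N)} (hx₀ : x₀ ∈ U)
    (hmax : IsLocalMax (fun y => f y - g y) x₀) :
    laplacian f x₀ ≤ laplacian g x₀ := by
  rw [laplacian_eq, laplacian_eq]
  apply Finset.sum_le_sum
  intro i _
  set v : EuclideanSpace ℝ (Fin N) := EuclideanSpace.single i (1:ℝ) with hv
  have hline_tendsto : Tendsto (fun t : ℝ => x₀ + t • v) (𝓝 0) (𝓝 x₀) := by
    have hc : Continuous (fun t : ℝ => x₀ + t • v) := by continuity
    simpa using hc.tendsto 0
  have hmemU : ∀ᶠ t in 𝓝 (0:ℝ), x₀ + t • v ∈ U :=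
    hline_tendsto.eventually (hU.mem_nhds hx₀)
  have hd : ∀ᶠ t in 𝓝 (0:ℝ), HasDerivAt (fun s => f (x₀ + s • v) - g (x₀ + s • v))
      (fderiv ℝ f (x₀ + t • v) v - fderiv ℝ g (x₀ + t • v) v) t := by
    filter_upwards [hmemU] with t ht
    have h1 : HasDerivAt (fun s => f (x₀ + s • v)) (fderiv ℝ f (x₀ + t • v) v) t :=
      line_hasDerivAt_s15 ((hf.contDiffAt (hU.mem_nhds ht)).differentiableAt two_ne_zero).hasFDerivAt
    have h2 : HasDerivAt (fun s => g (x₀ + s • v)) (fderiv ℝ g (x₀ + t • v) v) t :=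
      line_hasDerivAt_s15 ((hg.contDiffAt (hU.mem_nhds ht)).differentiableAt two_ne_zero).hasFDerivAt
    exact h1.sub h2
  have hmaxφ : IsLocalMax (fun s : ℝ => f (x₀ + s • v) - g (x₀ + s • v)) (0:ℝ) := by
    have h3 := hline_tendsto.eventually hmax
    filter_upwards [h3] with t ht
    simpa using ht
  have hF : HasFDerivAt (fun y => fderiv ℝ f y v)
      (fderiv ℝ (fun y => fderiv ℝ f y v) x₀) x₀ :=
    ((differentiableAt_fderiv hU hf hx₀).clm_apply (differentiableAt_const v)).hasFDerivAt
  have hG : HasFDerivAt (fun y => fderiv ℝ g y v)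
      (fderiv ℝ (fun y => fderiv ℝ g y v) x₀) x₀ :=
    ((differentiableAt_fderiv hU hg hx₀).clm_apply (differentiableAt_const v)).hasFDerivAt
  have hFG := hF.sub hG
  have h0 : x₀ = x₀ + (0:ℝ) • v := by simp
  rw [h0] at hFG
  have hψd := line_hasDerivAt_s15 hFG
  have key := second_deriv_nonpos_of_isLocalMax hmaxφ hd hψd
  rw [second_deriv_apply hU hf hx₀ v v, second_deriv_apply hU hg hx₀ v v]
  rw [← h0] at key
  simp only [ContinuousLinearMap.sub_apply] at key
  linarith

set_option maxHeartbeats 1000000 in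
lemma comparison {q : ℝ} (hq : 1 < q) {Λ r : ℝ} (hΛ : 0 < Λ) (hr0 : 0 < r) (hr1 : r < 1)
    (hC : 4 * (2/(q-1)) * (2/(q-1) + 1) + 2 * (2/(q-1)) * N ≤ Λ ^ (q-1))
    {u : EuclideanSpace ℝ (Fin N) → ℝ}
    (hu : ContDiffOn ℝ 2 u (Metric.ball 0 1))
    (hsub : ∀ x ∈ Metric.ball (0 : EuclideanSpace ℝ (Fin N)) 1, u x ^ q ≤ laplacian u x)
    {x : EuclideanSpace ℝ (Fin N)} (hx : ‖x‖ < r) :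
    u x ≤ Λ * r ^ (2/(q-1)) * (r ^ 2 - ‖x‖ ^ 2) ^ (-(2/(q-1))) := by
  by_contra hcon
  push_neg at hcon
  have hq1 : 0 < q - 1 := by linarith
  set α := 2/(q-1) with hαdef
  have hα : 0 < α := div_pos two_pos hq1
  set A := Λ * r ^ α with hAdef
  have hA : 0 < A := mul_pos hΛ (Real.rpow_pos_of_pos hr0 α)
  set W : EuclideanSpace ℝ (Fin N) → ℝ := fun z => A * (r ^ 2 - ‖z‖ ^ 2) ^ (-α) with hWdef
  have hball : Metric.ball (0 : EuclideanSpace ℝ (Fin N)) r ⊆ Metric.ball 0 1 :=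
    Metric.ball_subset_ball hr1.le
  have hcball : Metric.closedBall (0 : EuclideanSpace ℝ (Fin N)) r ⊆ Metric.ball 0 1 :=
    Metric.closedBall_subset_ball hr1
  -- bound for u on closedBall r
  obtain ⟨C, hCb⟩ := (isCompact_closedBall (0 : EuclideanSpace ℝ (Fin N)) r
    ).exists_bound_of_continuousOn (hu.continuousOn.mono hcball)
  have hub : ∀ y ∈ Metric.closedBall (0 : EuclideanSpace ℝ (Fin N)) r, u y ≤ C := by
    intro y hy
    calc u y ≤ ‖u y‖ := le_abs_self _
    _ ≤ C := hCb y hy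
  -- choose ρ
  set T := max (C / A) 1 with hT
  have hT1 : (1:ℝ) ≤ T := le_max_right _ _
  have hT0 : 0 < T := lt_of_lt_of_le one_pos hT1
  set s₀ := min ((2*T) ^ (-(1/α))) (r^2/2) with hs₀def
  have hs₀ : 0 < s₀ := lt_min (Real.rpow_pos_of_pos (by linarith) _) (by positivity)
  have hs₀r : s₀ ≤ r^2/2 := min_le_right _ _
  have hWbig : A * s₀ ^ (-α) > C := by
    have h1 : s₀ ^ (-α) ≥ ((2*T) ^ (-(1/α))) ^ (-α) :=
      Real.rpow_le_rpow_of_nonpos hs₀ (min_le_left _ _) (by linarith)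
    have h2 : ((2*T) ^ (-(1/α))) ^ (-α) = 2*T := by
      rw [← Real.rpow_mul (by linarith : (0:ℝ) ≤ 2*T), show (-(1/α)) * (-α) = 1 by
        field_simp, Real.rpow_one]
    have h3 : C ≤ A * T := by
      rw [hT]
      rcases le_max_iff.2 (Or.inl (le_refl (C/A))) with h
      calc C = A * (C / A) := by field_simp
      _ ≤ A * max (C / A) 1 := by
        exact mul_le_mul_of_nonneg_left (le_max_left _ _) hA.le
    calc C ≤ A * T := h3
    _ < A * (2*T) := by nlinarith
    _ ≤ A * s₀ ^ (-α) := by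
      rw [← h2]
      exact mul_le_mul_of_nonneg_left h1 hA.le
  -- the radius ρ
  set ρ := Real.sqrt (r^2 - s₀) with hρdef
  have hρsq : ρ^2 = r^2 - s₀ := Real.sq_sqrt (by nlinarith)
  have hρ0 : 0 ≤ ρ := Real.sqrt_nonneg _
  have hρr : ρ < r := by
    nlinarith [hρsq, hs₀]
  -- outside closedBall ρ the barrier dominates
  have h_out : ∀ y : EuclideanSpace ℝ (Fin N), ‖y‖ < r → ρ ≤ ‖y‖ → u y < W y := by
    intro y hy hρy
    have hsy : 0 < r^2 - ‖y‖^2 := spos hy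
    have hyρ : ρ^2 ≤ ‖y‖^2 := by nlinarith [norm_nonneg y]
    have hle : r^2 - ‖y‖^2 ≤ s₀ := by nlinarith [hρsq]
    have hW1 : s₀ ^ (-α) ≤ (r^2 - ‖y‖^2) ^ (-α) :=
      Real.rpow_le_rpow_of_nonpos hsy hle (by linarith)
    have huy : u y ≤ C := hub y (mem_closedBall_zero_iff.2 hy.le)
    calc u y ≤ C := huy
    _ < A * s₀ ^ (-α) := hWbig
    _ ≤ W y := mul_le_mul_of_nonneg_left hW1 hA.le
  have hWx : W x = A * (r ^ 2 - ‖x‖ ^ 2) ^ (-α) := rfl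
  have hxρ : ‖x‖ < ρ := by
    by_contra hxx
    push_neg at hxx
    have := h_out x hx hxx
    rw [hWx] at this
    linarith
  set K := Metric.closedBall (0 : EuclideanSpace ℝ (Fin N)) ρ with hKdef
  have hKc : IsCompact K := isCompact_closedBall _ _
  have hKne : K.Nonempty := ⟨0, Metric.mem_closedBall_self hρ0⟩
  have hKsub : K ⊆ Metric.ball (0 : EuclideanSpace ℝ (Fin N)) r :=
    Metric.closedBall_subset_ball hρr
  have hWcont : ContinuousOn W (Metric.ball (0 : EuclideanSpace ℝ (Fin N)) r) :=
    (contDiffOn_W A r (-α)).continuousOn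
  have hcont : ContinuousOn (fun y => u y - W y) K :=
    (hu.continuousOn.mono (hKsub.trans hball)).sub (hWcont.mono hKsub)
  obtain ⟨x₀, hx₀K, hmax⟩ := hKc.exists_isMaxOn hKne hcont
  have hx₀r : ‖x₀‖ < r := lt_of_le_of_lt (mem_closedBall_zero_iff.1 hx₀K) hρr
  have hpos0 : 0 < u x₀ - W x₀ := by
    have h4 : u x - W x ≤ u x₀ - W x₀ := hmax (mem_closedBall_zero_iff.2 hxρ.le)
    rw [hWx] at h4
    linarith
  have hlocmax : IsLocalMax (fun y => u y - W y) x₀ := by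
    have hballmem : Metric.ball (0 : EuclideanSpace ℝ (Fin N)) r ∈ 𝓝 x₀ :=
      Metric.isOpen_ball.mem_nhds (hKsub hx₀K)
    filter_upwards [hballmem] with y hy
    by_cases hyK : y ∈ K
    · exact hmax hyK
    · have hρy : ρ ≤ ‖y‖ := by
        by_contra hh
        push_neg at hh
        exact hyK (mem_closedBall_zero_iff.2 hh.le)
      have h9 := h_out y (mem_ball_zero_iff.1 hy) hρy
      linarith
  have hlap := laplacian_le_at_localMax Metric.isOpen_ball (hu.mono hball)
    (contDiffOn_W A r (-α)) (hKsub hx₀K) hlocmax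
  have h5 : u x₀ ^ q ≤ laplacian u x₀ := hsub x₀ (hball (hKsub hx₀K))
  have h6 : laplacian W x₀ ≤ (W x₀) ^ q := W_supersol hq hΛ hr0 hC hx₀r
  have hWx₀pos : 0 < W x₀ := mul_pos hA (Real.rpow_pos_of_pos (spos hx₀r) _)
  have h7 : (W x₀) ^ q < (u x₀) ^ q :=
    Real.rpow_lt_rpow hWx₀pos.le (by linarith) (by linarith)
  linarith

/-- Keller–Osserman barrier on the unit ball: there is `Λ = Λ(N,q) > 0` such that
`w(x) = Λ(1−|x|²)^{−2/(q−1)}` is a supersolution of `Δw = w^q` on the unit ball, and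
every positive C² subsolution `u` (`Δu ≥ u^q`) satisfies `u ≤ w`; in particular
`u(0) ≤ Λ`. -/
theorem keller_osserman_barrier (N : ℕ) (hN : 1 ≤ N) (q : ℝ) (hq : 1 < q) :
    ∃ Λ : ℝ, 0 < Λ ∧
      (∀ x ∈ Metric.ball (0 : EuclideanSpace ℝ (Fin N)) 1,
        laplacian (fun z => Λ * (1 - ‖z‖ ^ 2) ^ (-2 / (q - 1))) x
          ≤ (Λ * (1 - ‖x‖ ^ 2) ^ (-2 / (q - 1))) ^ q) ∧
      ∀ u : EuclideanSpace ℝ (Fin N) → ℝ,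
        ContDiffOn ℝ 2 u (Metric.ball (0 : EuclideanSpace ℝ (Fin N)) 1) →
        (∀ x ∈ Metric.ball (0 : EuclideanSpace ℝ (Fin N)) 1, 0 < u x) →
        (∀ x ∈ Metric.ball (0 : EuclideanSpace ℝ (Fin N)) 1, u x ^ q ≤ laplacian u x) →
        (∀ x ∈ Metric.ball (0 : EuclideanSpace ℝ (Fin N)) 1,
          u x ≤ Λ * (1 - ‖x‖ ^ 2) ^ (-2 / (q - 1))) ∧
        u 0 ≤ Λ := by
  have hq1 : 0 < q - 1 := by linarith
  have hα : 0 < 2/(q-1) := div_pos two_pos hq1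
  obtain ⟨Λ, hΛpos, hCle⟩ : ∃ Λ : ℝ, 0 < Λ ∧
      4 * (2/(q-1)) * (2/(q-1) + 1) + 2 * (2/(q-1)) * (N:ℝ) ≤ Λ ^ (q-1) := by
    have hC0 : (0:ℝ) ≤ 4 * (2/(q-1)) * (2/(q-1) + 1) + 2 * (2/(q-1)) * (N:ℝ) := by
      have hN0 : (0:ℝ) ≤ N := Nat.cast_nonneg N
      nlinarith
    refine ⟨(4 * (2/(q-1)) * (2/(q-1) + 1) + 2 * (2/(q-1)) * (N:ℝ) + 1) ^ (1/(q-1)),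
      Real.rpow_pos_of_pos (by linarith) _, ?_⟩
    rw [← Real.rpow_mul (by linarith), show 1/(q-1)*(q-1) = 1 by field_simp, Real.rpow_one]
    linarith
  refine ⟨Λ, hΛpos, ?_, ?_⟩
  · intro x hx
    rw [mem_ball_zero_iff] at hx
    have h := W_supersol (N := N) hq hΛpos one_pos hCle hx
    simp only [Real.one_rpow, one_pow, mul_one] at h
    rw [show (-2)/(q-1) = -(2/(q-1)) from neg_div _ _]
    exact h
  · intro u hu hupos hsub
    have main : ∀ y ∈ Metric.ball (0 : EuclideanSpace ℝ (Fin N)) 1,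
        u y ≤ Λ * (1 - ‖y‖ ^ 2) ^ (-2 / (q - 1)) := by
      intro y hy
      rw [mem_ball_zero_iff] at hy
      have hev : ∀ᶠ r in 𝓝[<] (1:ℝ),
          u y ≤ Λ * r ^ (2/(q-1)) * (r ^ 2 - ‖y‖ ^ 2) ^ (-(2/(q-1))) := by
        filter_upwards [Ioo_mem_nhdsLT_of_mem (⟨hy, le_refl 1⟩ : (1:ℝ) ∈ Ioc ‖y‖ 1)] with r hr
        exact comparison hq hΛpos (lt_of_le_of_lt (norm_nonneg y) hr.1) hr.2 hCle hu hsub hr.1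
      have htend : Tendsto (fun r : ℝ => Λ * r ^ (2/(q-1)) * (r ^ 2 - ‖y‖ ^ 2) ^ (-(2/(q-1))))
          (𝓝[<] (1:ℝ))
          (𝓝 (Λ * (1:ℝ) ^ (2/(q-1)) * ((1:ℝ) ^ 2 - ‖y‖ ^ 2) ^ (-(2/(q-1))))) := by
        apply Tendsto.mono_left _ nhdsWithin_le_nhds
        have hc1 : ContinuousAt (fun r : ℝ => r ^ (2/(q-1))) 1 :=
          Real.continuousAt_rpow_const _ _ (Or.inl one_ne_zero)
        have hc2 : ContinuousAt (fun r : ℝ => (r ^ 2 - ‖y‖ ^ 2) ^ (-(2/(q-1)))) 1 := by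
          apply ContinuousAt.rpow_const
          · fun_prop
          · left
            have h8 := norm_nonneg y
            intro hzero
            nlinarith
        exact ((continuousAt_const.mul hc1).mul hc2).tendsto
      have hfin := ge_of_tendsto htend hev
      rw [show (-2)/(q-1) = -(2/(q-1)) from neg_div _ _]
      simpa [Real.one_rpow] using hfin
    refine ⟨main, ?_⟩
    have h0 := main 0 (Metric.mem_ball_self one_pos)
    simpa [Real.one_rpow] using h0
end
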